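/- arXiv:1811.11966 — 4 statements merged into one kernel-verified Lean document; each statement's English description precedes it below -/
import Mathlib

section
/- Let G be a group and (𝒳,ρ) a categorified G-set. Let 𝒳₀ ⋊ G be the translation category of the G-action on the objects of 𝒳 (objects: objects of 𝒳; for each object x and g ∈ G a morphism (x,g) : ρ_g(x) → x, with composition (x,g) ∘ (ρ_g(x),h) = (x,g*h) read in the appropriate order and identities (x,1)), and let 𝒳₁ ⋊ G be the translation category of the G-action f ↦ ρ_g(f) on the morphisms of 𝒳. Then: (i) the assignments S, T : 𝒳₁ ⋊ G → 𝒳₀ ⋊ G sending a morphism f of 𝒳 to its source (respectively, target) and a translation arrow (f,g) to (source of f, g) (respectively, (target of f, g)) are functors; (ii) the assignment I : 𝒳₀ ⋊ G → 𝒳₁ ⋊ G sending x to id_x and (x,g) to (id_x, g) is a functor; (iii) composition in 𝒳 induces a functor M from the pullback category of S along T to 𝒳₁ ⋊ G, sending a composable pair (h,f) to h ∘ f and a pair of translation arrows ((h,g),(f,g)) to (h ∘ f, g); and (iv) these data satisfy S ∘ I = 𝟭 = T ∘ I, T ∘ M = T ∘ (first projection), S ∘ M = S ∘ (second projection), the associativity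 law M ∘ (M × Id) = M ∘ (Id × M) and the unit laws, so that (𝒳₀ ⋊ G, 𝒳₁ ⋊ G, S, T, I, M) is an internal category in the category Cat of small categories (a double category), called the right translation double category 𝒳 ⋊ G. -/
/-!
Common framework: a *categorified `G`-set* is a (small) category `C` equipped with a right
`G`-action by endofunctors, i.e. functors `ρ g : C ⥤ C` with `ρ 1 = 𝟭 C` and
`ρ (g * h) = ρ g ⋙ ρ h`.  Equivariant functors, equivariant natural transformations and
weak equivalences are as in the paper.
-/

open CategoryTheory

universe w v u v₁ v₂ v₃ v₄ u₁ u₂ u₃ u₄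

/-- A right action of a group `G` on a category `C` by endofunctors: the data making the
category `C` into a *categorified `G`-set*. -/
structure CatAction (G : Type w) [Group G] (C : Type u) [Category.{v} C] where
  ρ : G → C ⥤ C
  map_one : ρ 1 = 𝟭 C
  map_mul : ∀ g h : G, ρ (g * h) = ρ g ⋙ ρ h

variable {G : Type w} [Group G]

/-- Equivariance of a functor between categorified `G`-sets. -/
def IsEquivF {C : Type u₁} {D : Type u₂} [Category.{v₁} C] [Category.{v₂} D]
    (ρ : CatAction G C) (σ : CatAction G D) (F : C ⥤ D) : Prop :=
  ∀ g : G, ρ.ρ g ⋙ F = F ⋙ σ.ρ g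

theorem IsEquivF.id {C : Type u₁} [Category.{v₁} C] (ρ : CatAction G C) :
    IsEquivF ρ ρ (𝟭 C) := fun _ => rfl

theorem IsEquivF.comp {C : Type u₁} {D : Type u₂} {E : Type u₃}
    [Category.{v₁} C] [Category.{v₂} D] [Category.{v₃} E]
    {ρ : CatAction G C} {σ : CatAction G D} {τ : CatAction G E}
    {F : C ⥤ D} {P : D ⥤ E} (hF : IsEquivF ρ σ F) (hP : IsEquivF σ τ P) :
    IsEquivF ρ τ (F ⋙ P) := fun g => by
  rw [← Functor.assoc, hF g, Functor.assoc, hP g, ← Functor.assoc]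

/-- Equivariance of a natural transformation between equivariant functors: at every object
`x` the component at `ρ g x` coincides (through the canonical identifications) with `σ g`
applied to the component at `x`. -/
def IsEquivNT {C : Type u₁} {D : Type u₂} [Category.{v₁} C] [Category.{v₂} D]
    (ρ : CatAction G C) (σ : CatAction G D) {F F' : C ⥤ D}
    (hF : IsEquivF ρ σ F) (hF' : IsEquivF ρ σ F') (α : F ⟶ F') : Prop :=
  ∀ (g : G) (x : C),
    α.app ((ρ.ρ g).obj x) =
      eqToHom (Functor.congr_obj (hF g) x) ≫ (σ.ρ g).map (α.app x) ≫
        eqToHom (Functor.congr_obj (hF' g) x).symm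

/-- Weak equivalence of categorified `G`-sets: a pair of equivariant functors, quasi-inverse
to each other through equivariant natural isomorphisms. -/
def WeakEquivCat {C : Type u₁} {D : Type u₂} [Category.{v₁} C] [Category.{v₂} D]
    (ρ : CatAction G C) (σ : CatAction G D) : Prop :=
  ∃ (F : C ⥤ D) (P : D ⥤ C) (hF : IsEquivF ρ σ F) (hP : IsEquivF σ ρ P)
    (η : F ⋙ P ≅ 𝟭 C) (ε : P ⋙ F ≅ 𝟭 D),
    IsEquivNT ρ ρ (hF.comp hP) (IsEquivF.id ρ) η.hom ∧
    IsEquivNT σ σ (hP.comp hF) (IsEquivF.id σ) ε.hom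
section RightActions

/-- A right action of the group `G` on a type `X`: a right `G`-set. -/
structure RightAction (G : Type w) [Group G] (X : Type u) where
  act : X → G → X
  act_one : ∀ x, act x 1 = x
  act_mul : ∀ (x : X) (g h : G), act x (g * h) = act (act x g) h

/-- Equivariant maps of right `G`-sets. -/
def IsEquivMap {X : Type u₁} {Y : Type u₂} (a : RightAction G X) (b : RightAction G Y)
    (φ : X → Y) : Prop :=
  ∀ (x : X) (g : G), φ (a.act x g) = b.act (φ x) g

/-- The discrete categorified `G`-set `I(X)` associated to a right `G`-set `X`. -/
def discAction {X : Type u} (a : RightAction G X) : CatAction G (Discrete X) where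
  ρ g := Discrete.functor fun x => ⟨a.act x g⟩
  map_one := CategoryTheory.Functor.ext
    (fun x => by cases x with | mk x => simp [a.act_one])
    (fun _ _ _ => Subsingleton.elim _ _)
  map_mul g h := CategoryTheory.Functor.ext
    (fun x => by cases x with | mk x => simp [a.act_mul])
    (fun _ _ _ => Subsingleton.elim _ _)

/-- The trivial action of `G` on any category. -/
def trivialCatAction (G : Type w) [Group G] (C : Type u) [Category.{v} C] :
    CatAction G C where
  ρ _ := 𝟭 C
  map_one := rfl
  map_mul _ _ := rfl

end RightActions

section Translation

/-- The (right) translation category `X ⋊ G` of a right `G`-set `X`: objects are the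
elements of `X`, and for each `x : X` and `g : G` there is exactly one morphism
`(x, g) : x·g ⟶ x`. -/
def TransCat {X : Type u} (a : RightAction G X) : Type u := X

instance TransCat.category {X : Type u} (a : RightAction G X) :
    Category.{w} (TransCat a) where
  Hom x y := {g : G // x = a.act y g}
  id x := ⟨1, (a.act_one x).symm⟩
  comp {x y z} f g := ⟨g.1 * f.1,
    f.2.trans ((congrArg (fun w => a.act w f.1) g.2).trans (a.act_mul z g.1 f.1).symm)⟩
  id_comp f := Subtype.ext (mul_one _)
  comp_id f := Subtype.ext (one_mul _)
  assoc f g h := Subtype.ext (mul_assoc _ _ _).symm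

/-- An equivariant map of right `G`-sets induces a functor between the translation
categories. -/
def transMap {X : Type u₁} {Y : Type u₂} {a : RightAction G X} {b : RightAction G Y}
    (u : X → Y) (hu : ∀ (x : X) (g : G), u (a.act x g) = b.act (u x) g) :
    TransCat a ⥤ TransCat b where
  obj x := u x
  map {x y} f := ⟨f.1, (congrArg u f.2).trans (hu y f.1)⟩
  map_id x := Subtype.ext rfl
  map_comp f g := Subtype.ext rfl

variable {C : Type u} [Category.{v} C]

/-- The action of `G` on the objects of a categorified `G`-set. -/
def objAct (ρ : CatAction G C) : RightAction G C where
  act x g := (ρ.ρ g).obj x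
  act_one x := by show (ρ.ρ 1).obj x = x; rw [ρ.map_one]; rfl
  act_mul x g h := by
    show (ρ.ρ (g * h)).obj x = (ρ.ρ h).obj ((ρ.ρ g).obj x)
    rw [ρ.map_mul]; rfl

/-- The total type of morphisms of a category. -/
def MorTot (C : Type u) [Category.{v} C] : Type (max u v) := Σ p : C × C, p.1 ⟶ p.2

/-- The action of `G` on the (total type of) morphisms of a categorified `G`-set. -/
def morAct (ρ : CatAction G C) : RightAction G (MorTot C) where
  act m g := ⟨((ρ.ρ g).obj m.1.1, (ρ.ρ g).obj m.1.2), (ρ.ρ g).map m.2⟩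
  act_one m := by
    show (⟨((ρ.ρ 1).obj m.1.1, (ρ.ρ 1).obj m.1.2), (ρ.ρ 1).map m.2⟩ : MorTot C) = m
    rw [ρ.map_one]; rfl
  act_mul m g h := by
    show (⟨((ρ.ρ (g * h)).obj m.1.1, (ρ.ρ (g * h)).obj m.1.2), (ρ.ρ (g * h)).map m.2⟩ :
        MorTot C) = _
    rw [ρ.map_mul]; rfl

/-- Composable pairs of morphisms (the objects of the strict pullback of the source functor
along the target functor). -/
structure CompPair (C : Type u) [Category.{v} C] where
  {x y z : C}
  f : x ⟶ y
  h : y ⟶ z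

/-- The action of `G` on composable pairs. -/
def compAct (ρ : CatAction G C) : RightAction G (CompPair C) where
  act p g := ⟨(ρ.ρ g).map p.f, (ρ.ρ g).map p.h⟩
  act_one p := by
    show (⟨(ρ.ρ 1).map p.f, (ρ.ρ 1).map p.h⟩ : CompPair C) = p
    rw [ρ.map_one]; rfl
  act_mul p g h := by
    show (⟨(ρ.ρ (g * h)).map p.f, (ρ.ρ (g * h)).map p.h⟩ : CompPair C) = _
    rw [ρ.map_mul]; rfl

/-- Composable triples of morphisms. -/
structure TripleComp (C : Type u) [Category.{v} C] where
  {x y z w : C}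
  f : x ⟶ y
  g : y ⟶ z
  h : z ⟶ w

/-- The action of `G` on composable triples. -/
def tripleAct (ρ : CatAction G C) : RightAction G (TripleComp C) where
  act t k := ⟨(ρ.ρ k).map t.f, (ρ.ρ k).map t.g, (ρ.ρ k).map t.h⟩
  act_one t := by
    show (⟨(ρ.ρ 1).map t.f, (ρ.ρ 1).map t.g, (ρ.ρ 1).map t.h⟩ : TripleComp C) = t
    rw [ρ.map_one]; rfl
  act_mul t g h := by
    show (⟨(ρ.ρ (g * h)).map t.f, (ρ.ρ (g * h)).map t.g, (ρ.ρ (g * h)).map t.h⟩ :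
        TripleComp C) = _
    rw [ρ.map_mul]; rfl

variable (ρ : CatAction G C)

/-- The source functor `S : 𝒳₁ ⋊ G ⥤ 𝒳₀ ⋊ G`. -/
def Sfun : TransCat (morAct ρ) ⥤ TransCat (objAct ρ) :=
  transMap (fun m => m.1.1) (fun _ _ => rfl)

/-- The target functor `T : 𝒳₁ ⋊ G ⥤ 𝒳₀ ⋊ G`. -/
def Tfun : TransCat (morAct ρ) ⥤ TransCat (objAct ρ) :=
  transMap (fun m => m.1.2) (fun _ _ => rfl)

/-- The identity functor `I : 𝒳₀ ⋊ G ⥤ 𝒳₁ ⋊ G`, `x ↦ id_x`. -/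
def Ifun : TransCat (objAct ρ) ⥤ TransCat (morAct ρ) :=
  transMap (fun x => (⟨(x, x), 𝟙 x⟩ : MorTot C)) (fun x g => by simp [morAct, objAct]; rfl)

/-- The composition functor `M`, induced by composition in `𝒳`, from the (pullback)
category of composable pairs to `𝒳₁ ⋊ G`. -/
def Mfun : TransCat (compAct ρ) ⥤ TransCat (morAct ρ) :=
  transMap (fun p => (⟨(p.x, p.z), p.f ≫ p.h⟩ : MorTot C))
    (fun p g => by simp [morAct, compAct]; rfl)

/-- First projection from the pullback category: `(h, f) ↦ h`. -/
def pr1 : TransCat (compAct ρ) ⥤ TransCat (morAct ρ) :=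
  transMap (fun p => (⟨(p.y, p.z), p.h⟩ : MorTot C)) (fun _ _ => rfl)

/-- Second projection from the pullback category: `(h, f) ↦ f`. -/
def pr2 : TransCat (compAct ρ) ⥤ TransCat (morAct ρ) :=
  transMap (fun p => (⟨(p.x, p.y), p.f⟩ : MorTot C)) (fun _ _ => rfl)

/-- `M × Id`: composing the first two morphisms of a composable triple. -/
def assocL : TransCat (tripleAct ρ) ⥤ TransCat (compAct ρ) :=
  transMap (fun t => (⟨t.f ≫ t.g, t.h⟩ : CompPair C))
    (fun t g => by simp [tripleAct, compAct])

/-- `Id × M`: composing the last two morphisms of a composable triple. -/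
def assocR : TransCat (tripleAct ρ) ⥤ TransCat (compAct ρ) :=
  transMap (fun t => (⟨t.f, t.g ≫ t.h⟩ : CompPair C))
    (fun t g => by simp [tripleAct, compAct])

/-- Pairing a morphism with the identity of its source. -/
def unitL : TransCat (morAct ρ) ⥤ TransCat (compAct ρ) :=
  transMap (fun m => (⟨𝟙 m.1.1, m.2⟩ : CompPair C))
    (fun m g => by simp [morAct, compAct])

/-- Pairing a morphism with the identity of its target. -/
def unitR : TransCat (morAct ρ) ⥤ TransCat (compAct ρ) :=
  transMap (fun m => (⟨m.2, 𝟙 m.1.2⟩ : CompPair C))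
    (fun m g => by simp [morAct, compAct])


lemma transcat_eqToHom_fst {X : Type u₁} {a : RightAction G X} {x y : TransCat a}
    (h : x = y) : (eqToHom h).1 = 1 := by subst h; rfl

lemma transcat_functor_ext {X : Type u₁} {Y : Type u₂} {a : RightAction G X}
    {b : RightAction G Y} {F F' : TransCat a ⥤ TransCat b}
    (hobj : ∀ x, F.obj x = F'.obj x)
    (hmap : ∀ (x y : TransCat a) (f : x ⟶ y), (F.map f).1 = (F'.map f).1) :
    F = F' := by
  refine CategoryTheory.Functor.ext hobj (fun x y f => ?_)
  apply Subtype.ext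
  show (F.map f).1 = ((F'.map f ≫ eqToHom (hobj y).symm).1) * (eqToHom (hobj x)).1
  show (F.map f).1 = ((eqToHom (hobj y).symm).1 * (F'.map f).1) * (eqToHom (hobj x)).1
  rw [transcat_eqToHom_fst, transcat_eqToHom_fst, one_mul, mul_one, hmap]

/-- For a categorified `G`-set `(𝒳, ρ)`, the source, target, identity and
composition assignments between the translation categories `𝒳₁ ⋊ G` and `𝒳₀ ⋊ G` (and the
pullback category of `S` along `T`, realized as the translation category of the `G`-action
on composable pairs) are functors — witnessed by `Sfun`, `Tfun`, `Ifun`, `Mfun` above,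
whose values on objects and on translation arrows are the prescribed ones — and they
satisfy the axioms of an internal category in `Cat`, making
`(𝒳₀ ⋊ G, 𝒳₁ ⋊ G, S, T, I, M)` a double category: the right translation double category
`𝒳 ⋊ G`. -/
theorem translation_double_category :
    -- values of the functors on objects
    (∀ m : MorTot C, (Sfun ρ).obj m = m.1.1) ∧
    (∀ m : MorTot C, (Tfun ρ).obj m = m.1.2) ∧
    (∀ x : C, (Ifun ρ).obj x = (⟨(x, x), 𝟙 x⟩ : MorTot C)) ∧
    (∀ p : CompPair C, (Mfun ρ).obj p = (⟨(p.x, p.z), p.f ≫ p.h⟩ : MorTot C)) ∧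
    -- the functors send a translation arrow labelled by `g ∈ G` to the translation arrow
    -- labelled by the same `g`
    (∀ (m m' : TransCat (morAct ρ)) (φ : m ⟶ m'), ((Sfun ρ).map φ).1 = φ.1) ∧
    (∀ (m m' : TransCat (morAct ρ)) (φ : m ⟶ m'), ((Tfun ρ).map φ).1 = φ.1) ∧
    (∀ (x x' : TransCat (objAct ρ)) (φ : x ⟶ x'), ((Ifun ρ).map φ).1 = φ.1) ∧
    (∀ (p p' : TransCat (compAct ρ)) (φ : p ⟶ p'), ((Mfun ρ).map φ).1 = φ.1) ∧
    -- the internal-category axioms in `Cat`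
    (Ifun ρ ⋙ Sfun ρ = 𝟭 (TransCat (objAct ρ))) ∧
    (Ifun ρ ⋙ Tfun ρ = 𝟭 (TransCat (objAct ρ))) ∧
    (pr1 ρ ⋙ Sfun ρ = pr2 ρ ⋙ Tfun ρ) ∧
    (Mfun ρ ⋙ Tfun ρ = pr1 ρ ⋙ Tfun ρ) ∧
    (Mfun ρ ⋙ Sfun ρ = pr2 ρ ⋙ Sfun ρ) ∧
    (assocL ρ ⋙ Mfun ρ = assocR ρ ⋙ Mfun ρ) ∧
    (unitL ρ ⋙ Mfun ρ = 𝟭 (TransCat (morAct ρ))) ∧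
    (unitR ρ ⋙ Mfun ρ = 𝟭 (TransCat (morAct ρ))) := by
  refine ⟨fun _ => rfl, fun _ => rfl, fun _ => rfl, fun _ => rfl,
    fun _ _ _ => rfl, fun _ _ _ => rfl, fun _ _ _ => rfl, fun _ _ _ => rfl,
    rfl, rfl, rfl, rfl, rfl, ?_, ?_, ?_⟩
  · exact transcat_functor_ext (fun t => by simp [assocL, assocR, Mfun, transMap]; rfl)
      (fun _ _ _ => rfl)
  · exact transcat_functor_ext (fun m => by obtain ⟨⟨x,y⟩,f⟩ := m; simp [unitL, Mfun, transMap]; show (⟨(x, y), 𝟙 x ≫ f⟩ : MorTot C) = ⟨(x, y), f⟩; rw [Category.id_comp])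
      (fun _ _ _ => rfl)
  · exact transcat_functor_ext (fun m => by obtain ⟨⟨x,y⟩,f⟩ := m; simp [unitR, Mfun, transMap]; show (⟨(x, y), f ≫ 𝟙 y⟩ : MorTot C) = ⟨(x, y), f⟩; rw [Category.comp_id])
      (fun _ _ _ => rfl)

end Translation
end

section
/- Let G be a group, (𝒳,ρ) a categorified G-set, and R a set of representatives of the objects of 𝒳 for the equivalence relation ⊡*. Then 𝒳 is the disjoint union of the orbit categories Sq(a) for a ∈ R: every object of 𝒳 lies in exactly one Sq(a); every morphism of 𝒳 has its source and target in the same Sq(a); and each Sq(a) is a categorified G-subset of 𝒳 (its object and morphism sets are stable under every ρ_g). Moreover, for each a ∈ R there do not exist two nonempty categorified G-subsets 𝒴 and 𝒴' with Sq(a) = 𝒴 ⊎ 𝒴'. -/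
/-!
Common framework: a *categorified `G`-set* is a (small) category `C` equipped with a right
`G`-action by endofunctors, i.e. functors `ρ g : C ⥤ C` with `ρ 1 = 𝟭 C` and
`ρ (g * h) = ρ g ⋙ ρ h`.  Equivariant functors, equivariant natural transformations and
weak equivalences are as in the paper.
-/

open CategoryTheory

universe w v u v₁ v₂ v₃ v₄ u₁ u₂ u₃ u₄

variable {G : Type w} [Group G]

section Squares

variable {C : Type u} [Category.{v} C]

/-- The relation `a ⊡ b` on objects of a categorified `G`-set: `a` and `b` are both
vertices of some square of the translation double category, i.e. there are a morphism
`f : x ⟶ y` of `𝒳` and `g ∈ G` with `a, b ∈ {x, y, ρ_g x, ρ_g y}`. -/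
def sqRel (ρ : CatAction G C) (a b : C) : Prop :=
  ∃ (x y : C) (_ : x ⟶ y) (g : G),
    (a = x ∨ a = y ∨ a = (ρ.ρ g).obj x ∨ a = (ρ.ρ g).obj y) ∧
    (b = x ∨ b = y ∨ b = (ρ.ρ g).obj x ∨ b = (ρ.ρ g).obj y)

/-- `⊡*`: the equivalence relation generated by `⊡`. -/
def sqStar (ρ : CatAction G C) : C → C → Prop :=
  Relation.EqvGen (sqRel ρ)

end Squares

/-- Let `R` be a set of representatives of the objects of a categorified
`G`-set `𝒳` for the equivalence relation `⊡*`.  Then `𝒳` is the disjoint union of the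
orbit categories `Sq(a)`, `a ∈ R`: every object lies in exactly one class, every morphism
has its source and target in the same class, each class is stable under the action of `G`
(so each `Sq(a)` is a categorified `G`-subset); moreover no `Sq(a)` admits a decomposition
into two nonempty categorified `G`-subsets. -/
theorem orbit_decomposition {G : Type w} [Group G]
    {C : Type u} [Category.{v} C] (ρ : CatAction G C) (R : Set C)
    (hR : ∀ x : C, ∃! a, a ∈ R ∧ sqStar ρ a x) :
    (∀ x : C, ∃! a, a ∈ R ∧ sqStar ρ a x) ∧
    (∀ {x y : C}, (x ⟶ y) → ∀ a : C, (sqStar ρ a x ↔ sqStar ρ a y)) ∧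
    (∀ (a x : C) (g : G), sqStar ρ a x → sqStar ρ a ((ρ.ρ g).obj x)) ∧
    (∀ a ∈ R, ¬ ∃ P Q : C → Prop,
      (∀ x : C, sqStar ρ a x ↔ (P x ∨ Q x)) ∧
      (∀ x : C, ¬ (P x ∧ Q x)) ∧
      (∃ x : C, P x) ∧ (∃ x : C, Q x) ∧
      (∀ (g : G) (x : C), P x → P ((ρ.ρ g).obj x)) ∧
      (∀ (g : G) (x : C), Q x → Q ((ρ.ρ g).obj x)) ∧
      (∀ {x y : C}, (x ⟶ y) → (P x ↔ P y))) := by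
  have hGinv : ∀ (g : G) (x : C), (ρ.ρ g⁻¹).obj ((ρ.ρ g).obj x) = x := by
    intro g x
    have h : ρ.ρ g ⋙ ρ.ρ g⁻¹ = 𝟭 C := by
      rw [← ρ.map_mul, mul_inv_cancel, ρ.map_one]
    exact Functor.congr_obj h x
  have relMor : ∀ {x y : C}, (x ⟶ y) → sqRel ρ x y := fun {x y} f =>
    ⟨x, y, f, 1, Or.inl rfl, Or.inr (Or.inl rfl)⟩
  have relAct : ∀ (g : G) (x : C), sqRel ρ x ((ρ.ρ g).obj x) := fun g x =>
    ⟨x, x, 𝟙 x, g, Or.inl rfl, Or.inr (Or.inr (Or.inl rfl))⟩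
  refine ⟨hR, ?_, ?_, ?_⟩
  · intro x y f a
    constructor
    · intro h; exact Relation.EqvGen.trans _ _ _ h (Relation.EqvGen.rel _ _ (relMor f))
    · intro h
      exact Relation.EqvGen.trans _ _ _ h
        (Relation.EqvGen.symm _ _ (Relation.EqvGen.rel _ _ (relMor f)))
  · intro a x g h
    exact Relation.EqvGen.trans _ _ _ h (Relation.EqvGen.rel _ _ (relAct g x))
  · rintro a _ ⟨P, Q, hiff, hdisj, ⟨p, hp⟩, ⟨q, hq⟩, hPG, hQG, hPM⟩
    -- P is invariant under sqRel
    have hPact : ∀ (g : G) (x : C), P x ↔ P ((ρ.ρ g).obj x) := by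
      intro g x
      refine ⟨hPG g x, fun h => ?_⟩
      have := hPG g⁻¹ _ h
      rwa [hGinv] at this
    have hrel : ∀ x y : C, sqRel ρ x y → (P x ↔ P y) := by
      rintro x y ⟨u, v, f, g, ha, hb⟩
      have key : ∀ z : C,
          (z = u ∨ z = v ∨ z = (ρ.ρ g).obj u ∨ z = (ρ.ρ g).obj v) → (P z ↔ P u) := by
        rintro z (rfl | rfl | rfl | rfl)
        · exact Iff.rfl
        · exact (hPM f).symm
        · exact (hPact g u).symm
        · exact ((hPact g v).symm).trans ((hPM f).symm)
      exact (key x ha).trans (key y hb).symm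
    have hstar : ∀ x y : C, sqStar ρ x y → (P x ↔ P y) := by
      intro x y h
      induction h with
      | rel _ _ h => exact hrel _ _ h
      | refl _ => exact Iff.rfl
      | symm _ _ _ ih => exact ih.symm
      | trans _ _ _ _ _ ih1 ih2 => exact ih1.trans ih2
    have hap : sqStar ρ a p := (hiff p).mpr (Or.inl hp)
    have haq : sqStar ρ a q := (hiff q).mpr (Or.inr hq)
    have : sqStar ρ p q := Relation.EqvGen.trans _ _ _ (Relation.EqvGen.symm _ _ hap) haq
    exact hdisj q ⟨(hstar p q this).mp hp, hq⟩
end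

section
/- Let G be a group and let X and Y be finite right G-sets. If the discrete categorified G-sets I(X) and I(Y) are weakly equivalent, then X and Y are isomorphic as right G-sets (there is an equivariant bijection X → Y). (This is the injectivity of the comparison homomorphism from the classical Burnside rig of G to the categorified Burnside rig of G.) -/
/-!
Common framework: a *categorified `G`-set* is a (small) category `C` equipped with a right
`G`-action by endofunctors, i.e. functors `ρ g : C ⥤ C` with `ρ 1 = 𝟭 C` and
`ρ (g * h) = ρ g ⋙ ρ h`.  Equivariant functors, equivariant natural transformations and
weak equivalences are as in the paper.
-/

open CategoryTheory

universe w v u v₁ v₂ v₃ v₄ u₁ u₂ u₃ u₄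

variable {G : Type w} [Group G]

/-- If `X` and `Y` are finite right `G`-sets whose associated discrete
categorified `G`-sets `I(X)` and `I(Y)` are weakly equivalent, then `X ≅ Y` as right
`G`-sets: there is an equivariant bijection `X → Y`. -/
theorem discrete_weakEquiv_iso {G : Type w} [Group G] {X Y : Type u}
    [Finite X] [Finite Y] (a : RightAction G X) (b : RightAction G Y)
    (h : WeakEquivCat (discAction a) (discAction b)) :
    ∃ φ : X → Y, Function.Bijective φ ∧ IsEquivMap a b φ := by
  obtain ⟨F, P, hF, hP, η, ε, -, -⟩ := h
  refine ⟨fun x => (F.obj ⟨x⟩).as, ?_, ?_⟩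
  · refine Function.bijective_iff_has_inverse.mpr ⟨fun y => (P.obj ⟨y⟩).as, ?_, ?_⟩
    · intro x
      have := Discrete.eq_of_hom (η.hom.app ⟨x⟩)
      simpa using this
    · intro y
      have := Discrete.eq_of_hom (ε.hom.app ⟨y⟩)
      simpa using this
  · intro x g
    have := Functor.congr_obj (hF g) ⟨x⟩
    have h2 : (F.obj ⟨a.act x g⟩).as = (⟨b.act (F.obj ⟨x⟩).as g⟩ : Discrete Y).as :=
      congrArg Discrete.as this
    simpa using h2
end

section
/- Let G be a group, let X, Y, A, B be finite right G-sets, and let ℰ be a finite categorified G-set. If the categorified G-set I(X) ⊎ I(B) ⊎ ℰ is weakly equivalent to I(A) ⊎ I(Y) ⊎ ℰ, then the right G-sets X ⊎ B and A ⊎ Y are isomorphic. (This is the injectivity of the induced ring homomorphism from the classical Burnside ring of G to the categorified Burnside ring of G.) -/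
/-!
Common framework: a *categorified `G`-set* is a (small) category `C` equipped with a right
`G`-action by endofunctors, i.e. functors `ρ g : C ⥤ C` with `ρ 1 = 𝟭 C` and
`ρ (g * h) = ρ g ⋙ ρ h`.  Equivariant functors, equivariant natural transformations and
weak equivalences are as in the paper.
-/

open CategoryTheory

universe w v u v₁ v₂ v₃ v₄ u₁ u₂ u₃ u₄

variable {G : Type w} [Group G]

section SumPart

variable {C : Type u} {D : Type u} [Category.{v} C] [Category.{v} D]

theorem sum_id_id : (𝟭 C).sum (𝟭 D) = 𝟭 (C ⊕ D) :=
  CategoryTheory.Functor.ext (fun X => by cases X <;> rfl)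
    (fun X Y f => by cases X <;> cases Y <;> first | (exact (hom_inl_inr_false _ _ f).elim) | (exact (hom_inr_inl_false _ _ f).elim) | (erw [eqToHom_refl, eqToHom_refl, Category.id_comp, Category.comp_id]; rfl))

theorem sum_comp_sum {C' D' C'' D'' : Type u}
    [Category.{v} C'] [Category.{v} D'] [Category.{v} C''] [Category.{v} D'']
    (F : C ⥤ C') (F' : C' ⥤ C'') (K : D ⥤ D') (K' : D' ⥤ D'') :
    (F ⋙ F').sum (K ⋙ K') = F.sum K ⋙ F'.sum K' :=
  CategoryTheory.Functor.ext (fun X => by cases X <;> rfl)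
    (fun X Y f => by cases X <;> cases Y <;> first | (exact (hom_inl_inr_false _ _ f).elim) | (exact (hom_inr_inl_false _ _ f).elim) | (erw [eqToHom_refl, eqToHom_refl, Category.id_comp, Category.comp_id]; rfl))

/-- The disjoint union of two categorified `G`-sets, with the componentwise action. -/
def CatAction.sum (ρ : CatAction G C) (τ : CatAction G D) : CatAction G (C ⊕ D) where
  ρ g := (ρ.ρ g).sum (τ.ρ g)
  map_one := by simp only [ρ.map_one, τ.map_one, sum_id_id]
  map_mul g h := by simp only [ρ.map_mul, τ.map_mul, sum_comp_sum]

end SumPart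
/-- The disjoint union of two right `G`-sets. -/
def RightAction.sum {X : Type u} {Y : Type u} (a : RightAction G X) (b : RightAction G Y) :
    RightAction G (X ⊕ Y) where
  act p g := match p with
    | .inl x => .inl (a.act x g)
    | .inr y => .inr (b.act y g)
  act_one p := by cases p <;> simp [a.act_one, b.act_one]
  act_mul p g h := by cases p <;> simp [a.act_mul, b.act_mul]

/-! ### Auxiliary machinery -/

namespace BurnsideAux

open CategoryTheory

variable {G : Type w} [Group G]

/-- An equivariant bijection between right `G`-sets. -/
structure EqvEquiv {X : Type u₁} {Y : Type u₂} (a : RightAction G X) (b : RightAction G Y) where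
  toEquiv : X ≃ Y
  equiv : IsEquivMap a b toEquiv

namespace EqvEquiv

variable {X Y Z : Type u₁}
variable {a : RightAction G X} {b : RightAction G Y} {c : RightAction G Z}

def refl (a : RightAction G X) : EqvEquiv a a := ⟨Equiv.refl X, fun _ _ => rfl⟩

def symm (e : EqvEquiv a b) : EqvEquiv b a where
  toEquiv := e.toEquiv.symm
  equiv y g := e.toEquiv.injective <| by
    rw [Equiv.apply_symm_apply, e.equiv, Equiv.apply_symm_apply]

def trans (e : EqvEquiv a b) (f : EqvEquiv b c) : EqvEquiv a c where
  toEquiv := e.toEquiv.trans f.toEquiv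
  equiv x g := by rw [Equiv.trans_apply, Equiv.trans_apply, e.equiv, f.equiv]

def sumCongr {X' Y' : Type u₁} {a' : RightAction G X'} {b' : RightAction G Y'}
    (e : EqvEquiv a a') (f : EqvEquiv b b') :
    EqvEquiv (a.sum b) (a'.sum b') where
  toEquiv := e.toEquiv.sumCongr f.toEquiv
  equiv p g := by
    cases p <;> simp [RightAction.sum] <;> first | exact e.equiv _ _ | exact f.equiv _ _

def sumAssoc {a : RightAction G X} {b : RightAction G Y} {c : RightAction G Z} :
    EqvEquiv ((a.sum b).sum c) (a.sum (b.sum c)) where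
  toEquiv := Equiv.sumAssoc X Y Z
  equiv p g := by rcases p with (x | y) | z <;> simp [RightAction.sum]

end EqvEquiv

/-! ### Cancellation of a common finite summand -/

section Cancel

variable {S T Z : Type u₁}

/-- One step of the chain: elements of `T` are absorbing, elements of `Z` get fed back
through `e`. -/
def step (e : S ⊕ Z ≃ T ⊕ Z) : T ⊕ Z → T ⊕ Z :=
  Sum.elim Sum.inl fun z => e (Sum.inr z)

theorem step_injOn_right (e : S ⊕ Z ≃ T ⊕ Z) {p q : T ⊕ Z}
    (hp : p.isRight) (hq : q.isRight) (h : step e p = step e q) : p = q := by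
  rcases p with t | z; · simp at hp
  rcases q with t | z'; · simp at hq
  simp only [step, Sum.elim_inr] at h
  rw [Sum.inr.inj (e.injective h)]

theorem step_left (e : S ⊕ Z ≃ T ⊕ Z) (t : T) : step e (Sum.inl t) = Sum.inl t := rfl

theorem iterate_step_left (e : S ⊕ Z ≃ T ⊕ Z) (t : T) (n : ℕ) :
    (step e)^[n] (Sum.inl t) = Sum.inl t := by
  induction n with
  | zero => rfl
  | succ n ih => rw [Function.iterate_succ_apply, step_left, ih]

/-- Starting from the image of a left element, the chain eventually escapes to `T`. -/
theorem exists_escape [Finite Z] (e : S ⊕ Z ≃ T ⊕ Z) (s : S) :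
    ∃ n, ((step e)^[n] (e (Sum.inl s))).isLeft := by
  by_contra hcon
  push_neg at hcon
  have hR : ∀ n, ((step e)^[n] (e (Sum.inl s))).isRight := fun n =>
    Sum.not_isLeft.mp (by simpa using hcon n)
  -- extract the `Z`-component
  have hz : ∀ n, ∃ z : Z, (step e)^[n] (e (Sum.inl s)) = Sum.inr z := fun n =>
    Sum.isRight_iff.mp (hR n)
  choose ζ hζ using hz
  -- `ζ` cannot be injective
  obtain ⟨m, n, hmn, hzeq⟩ : ∃ m n, m < n ∧ ζ m = ζ n := by
    obtain ⟨m, n, hne, hzeq⟩ := Finite.exists_ne_map_eq_of_infinite ζ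
    rcases hne.lt_or_gt with h | h
    · exact ⟨m, n, h, hzeq⟩
    · exact ⟨n, m, h, hzeq.symm⟩
  -- cancel backwards
  have hback : ∀ k ≤ m, (step e)^[m - k] (e (Sum.inl s)) = (step e)^[n - k] (e (Sum.inl s)) := by
    intro k hk
    induction k with
    | zero => simpa [hζ m, hζ n] using congrArg (Sum.inr : Z → T ⊕ Z) hzeq
    | succ k ih =>
      have hk' : k ≤ m := Nat.le_of_succ_le hk
      have h1 : m - k = (m - (k + 1)) + 1 := by omega
      have h2 : n - k = (n - (k + 1)) + 1 := by omega
      have := ih hk'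
      rw [h1, h2, Function.iterate_succ_apply', Function.iterate_succ_apply'] at this
      exact step_injOn_right e (hR _) (hR _) this
  have hfinal := hback m le_rfl
  rw [Nat.sub_self] at hfinal
  have hnm : n - m = (n - m - 1) + 1 := by omega
  rw [hnm, Function.iterate_succ_apply'] at hfinal
  have hr := hR (n - m - 1)
  rcases Sum.isRight_iff.mp hr with ⟨z, hzz⟩
  rw [hzz] at hfinal
  have : Sum.inl s = Sum.inr z := e.injective (by simp only [step, Sum.elim_inr] at hfinal; exact hfinal)
  simp at this

/-- Reversing a minimal escape chain. -/
theorem reverse_chain (e : S ⊕ Z ≃ T ⊕ Z) :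
    ∀ (n : ℕ) (q : S ⊕ Z) (t : T),
      (step e)^[n] (e q) = Sum.inl t →
      (∀ k < n, ((step e)^[k] (e q)).isRight) →
      (step e.symm)^[n] (e.symm (Sum.inl t)) = q := by
  intro n
  induction n with
  | zero =>
    intro q t h _
    simp only [Function.iterate_zero, id] at h ⊢
    rw [← h, Equiv.symm_apply_apply]
  | succ n ih =>
    intro q t h hr
    have h0 : (e q).isRight := by simpa using hr 0 (Nat.succ_pos n)
    rcases Sum.isRight_iff.mp h0 with ⟨z, hz⟩
    have hq : q = e.symm (Sum.inr z) := by rw [← hz, Equiv.symm_apply_apply]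
    have hstep : step e (e q) = e (Sum.inr z) := by rw [hz]; rfl
    have h' : (step e)^[n] (e (Sum.inr z)) = Sum.inl t := by
      rw [← hstep, ← Function.iterate_succ_apply]; exact h
    have hr' : ∀ k < n, ((step e)^[k] (e (Sum.inr z))).isRight := by
      intro k hk
      have := hr (k + 1) (Nat.succ_lt_succ hk)
      rwa [Function.iterate_succ_apply, hstep] at this
    have := ih (Sum.inr z) t h' hr'
    rw [Function.iterate_succ_apply', this]
    rw [hq]; rfl

/-- Once the chain reaches the left, it stays there: values at later times. -/
theorem iterate_step_stable (e : S ⊕ Z ≃ T ⊕ Z) {p : T ⊕ Z} {n : ℕ} {t : T}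
    (h : (step e)^[n] p = Sum.inl t) {m : ℕ} (hm : n ≤ m) :
    (step e)^[m] p = Sum.inl t := by
  obtain ⟨k, rfl⟩ := Nat.exists_eq_add_of_le hm
  rw [Nat.add_comm, Function.iterate_add_apply, h, iterate_step_left]

variable [Finite Z]

/-- The escape time. -/
noncomputable def esc (e : S ⊕ Z ≃ T ⊕ Z) (s : S) : ℕ := Nat.find (exists_escape e s)

theorem esc_spec (e : S ⊕ Z ≃ T ⊕ Z) (s : S) :
    ∃ t : T, (step e)^[esc e s] (e (Sum.inl s)) = Sum.inl t :=
  Sum.isLeft_iff.mp (Nat.find_spec (exists_escape e s))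

/-- The escaped value. -/
noncomputable def escVal (e : S ⊕ Z ≃ T ⊕ Z) (s : S) : T := (esc_spec e s).choose

theorem escVal_spec (e : S ⊕ Z ≃ T ⊕ Z) (s : S) :
    (step e)^[esc e s] (e (Sum.inl s)) = Sum.inl (escVal e s) :=
  (esc_spec e s).choose_spec

theorem esc_min (e : S ⊕ Z ≃ T ⊕ Z) (s : S) {k : ℕ} (hk : k < esc e s) :
    ((step e)^[k] (e (Sum.inl s))).isRight :=
  Sum.not_isLeft.mp (Nat.find_min (exists_escape e s) hk)

/-- The key roundtrip identity. -/
theorem escVal_escVal (e : S ⊕ Z ≃ T ⊕ Z) [Finite S] (s : S) :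
    escVal e.symm (escVal e s) = s := by
  set t := escVal e s with ht
  have h1 : (step e.symm)^[esc e s] (e.symm (Sum.inl t)) = Sum.inl s := by
    have := reverse_chain e (esc e s) (Sum.inl s) t (escVal_spec e s)
      (fun k hk => esc_min e s hk)
    exact this
  -- the chain for `e.symm` starting at `t` escapes, so `esc e.symm t` is at most `esc e s`
  have hle : esc e.symm t ≤ esc e s :=
    Nat.find_le (by rw [h1]; exact rfl)
  have := iterate_step_stable e.symm (escVal_spec e.symm t) hle
  rw [h1] at this
  exact Sum.inl.inj this.symm

end Cancel

/-- Equivariant cancellation of a common finite summand of finite right `G`-sets. -/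
noncomputable def cancel_sum {S T Z : Type u₁} [Finite Z] [Finite S] [Finite T]
    {aS : RightAction G S} {aT : RightAction G T} {aZ : RightAction G Z}
    (e : EqvEquiv (aS.sum aZ) (aT.sum aZ)) : EqvEquiv aS aT := by
  obtain ⟨e, he⟩ := e
  have hsymm : IsEquivMap (aT.sum aZ) (aS.sum aZ) e.symm := fun y g =>
    e.injective <| by rw [Equiv.apply_symm_apply, he, Equiv.apply_symm_apply]
  -- `step` commutes with the action
  have hstep : ∀ (p : T ⊕ Z) (g : G),
      step e ((aT.sum aZ).act p g) = (aT.sum aZ).act (step e p) g := by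
    intro p g
    rcases p with t | z
    · rfl
    · show e (Sum.inr (aZ.act z g)) = (aT.sum aZ).act (e (Sum.inr z)) g
      exact he (Sum.inr z) g
  have hstep' : ∀ (p : S ⊕ Z) (g : G),
      step e.symm ((aS.sum aZ).act p g) = (aS.sum aZ).act (step e.symm p) g := by
    intro p g
    rcases p with s | z
    · rfl
    · show e.symm (Sum.inr (aZ.act z g)) = (aS.sum aZ).act (e.symm (Sum.inr z)) g
      exact hsymm (Sum.inr z) g
  have hstepIter : ∀ (n : ℕ) (p : T ⊕ Z) (g : G),
      (step e)^[n] ((aT.sum aZ).act p g) = (aT.sum aZ).act ((step e)^[n] p) g := by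
    intro n
    induction n with
    | zero => intro p g; rfl
    | succ n ih => intro p g; rw [Function.iterate_succ_apply, hstep, ih,
        Function.iterate_succ_apply]
  have hactLeft : ∀ (p : T ⊕ Z) (g : G), ((aT.sum aZ).act p g).isLeft = p.isLeft := by
    intro p g; rcases p with t | z <;> rfl
  -- equivariance of escVal
  have hequiv : ∀ (s : S) (g : G), escVal e (aS.act s g) = aT.act (escVal e s) g := by
    intro s g
    have hes : e (Sum.inl (aS.act s g)) = (aT.sum aZ).act (e (Sum.inl s)) g := he (Sum.inl s) g
    have hesc : esc e (aS.act s g) = esc e s := by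
      unfold esc
      congr 1
      · ext n
        rw [hes, hstepIter, hactLeft]
    have := escVal_spec e (aS.act s g)
    rw [hesc, hes, hstepIter, escVal_spec e s] at this
    exact (Sum.inl.inj this).symm
  exact {
    toEquiv := {
      toFun := escVal e
      invFun := escVal e.symm
      left_inv := fun s => escVal_escVal e s
      right_inv := fun t => by simpa using escVal_escVal e.symm t }
    equiv := hequiv }

/-! ### Isomorphism classes of a categorified `G`-set -/

section Pi0

variable {C D : Type u₁} [Category.{v₁} C] [Category.{v₁} D]

/-- The type of isomorphism classes of objects. -/
abbrev Pi0 (C : Type u₁) [Category.{v₁} C] := Quotient (isIsomorphicSetoid C)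

/-- The induced `G`-action on isomorphism classes. -/
def pi0Action (ρ : CatAction G C) : RightAction G (Pi0 C) where
  act q g := Quotient.map (ρ.ρ g).obj
    (fun x y h => Nonempty.map (ρ.ρ g).mapIso h) q
  act_one q := by
    refine Quotient.inductionOn q (fun x => ?_)
    show Quotient.mk _ ((ρ.ρ 1).obj x) = Quotient.mk _ x
    exact congrArg (Quotient.mk _) (Functor.congr_obj ρ.map_one x)
  act_mul q g h := by
    refine Quotient.inductionOn q (fun x => ?_)
    show Quotient.mk _ ((ρ.ρ (g * h)).obj x) = Quotient.mk _ ((ρ.ρ h).obj ((ρ.ρ g).obj x))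
    exact congrArg (Quotient.mk _) (Functor.congr_obj (ρ.map_mul g h) x)

/-- An equivariant weak equivalence induces an equivariant bijection on isomorphism
classes. -/
noncomputable def pi0EqvEquiv {ρ : CatAction G C} {σ : CatAction G D}
    (F : C ⥤ D) (P : D ⥤ C) (hF : IsEquivF ρ σ F)
    (η : F ⋙ P ≅ 𝟭 C) (ε : P ⋙ F ≅ 𝟭 D) :
    EqvEquiv (pi0Action ρ) (pi0Action σ) where
  toEquiv := Equiv.ofBijective
    (Quotient.map F.obj (fun x y h => Nonempty.map F.mapIso h))
    (by
      constructor
      · refine fun q q' => Quotient.inductionOn₂ q q' (fun x y h => ?_)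
        have h : Nonempty (F.obj x ≅ F.obj y) :=
          Quotient.exact (show Quotient.mk (isIsomorphicSetoid D) (F.obj x) = Quotient.mk _ (F.obj y) from h)
        obtain ⟨i⟩ := h
        exact Quotient.sound (show Nonempty (x ≅ y) from ⟨(η.app x).symm ≪≫ P.mapIso i ≪≫ η.app y⟩)
      · refine fun q => Quotient.inductionOn q (fun d => ?_)
        refine ⟨Quotient.mk _ (P.obj d), ?_⟩
        show Quotient.mk _ (F.obj (P.obj d)) = Quotient.mk _ d
        refine Quotient.sound (show Nonempty ((P ⋙ F).obj d ≅ d) from ?_)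
        exact ⟨ε.app d⟩)
  equiv q g := by
    refine Quotient.inductionOn q (fun x => ?_)
    show Quotient.mk _ (F.obj ((ρ.ρ g).obj x)) = Quotient.mk _ ((σ.ρ g).obj (F.obj x))
    exact congrArg (Quotient.mk _) (Functor.congr_obj (hF g) x)

/-- Isomorphism classes of a discrete category. -/
def pi0Disc {X : Type u₁} (a : RightAction G X) :
    EqvEquiv (pi0Action (discAction a)) a where
  toEquiv := {
    toFun := Quotient.lift (fun d : Discrete X => d.as)
      (fun x y h => by obtain ⟨i⟩ := h; exact Discrete.eq_of_hom i.hom)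
    invFun := fun x => Quotient.mk _ ⟨x⟩
    left_inv := fun q => Quotient.inductionOn q (fun d => by
      simp only [Quotient.lift_mk])
    right_inv := fun x => rfl }
  equiv q g := by
    refine Quotient.inductionOn q (fun d => ?_)
    rfl

/-- Isomorphism classes of a sum category. -/
def pi0Sum (ρ : CatAction G C) (τ : CatAction G D) :
    EqvEquiv (pi0Action (ρ.sum τ)) ((pi0Action ρ).sum (pi0Action τ)) where
  toEquiv := {
    toFun := Quotient.lift
      (Sum.elim (fun x => Sum.inl (Quotient.mk _ x)) (fun y => Sum.inr (Quotient.mk _ y)))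
      (by
        rintro (x | x) (y | y) ⟨i⟩
        · exact congrArg Sum.inl (Quotient.sound ⟨⟨i.hom.down, i.inv.down, congrArg ULift.down i.hom_inv_id, congrArg ULift.down i.inv_hom_id⟩⟩)
        · exact (CategoryTheory.hom_inl_inr_false _ _ i.hom).elim
        · exact (CategoryTheory.hom_inr_inl_false _ _ i.hom).elim
        · exact congrArg Sum.inr (Quotient.sound ⟨⟨i.hom.down, i.inv.down, congrArg ULift.down i.hom_inv_id, congrArg ULift.down i.inv_hom_id⟩⟩))
    invFun := Sum.elim
      (Quotient.lift (fun x => Quotient.mk _ (Sum.inl x : C ⊕ D))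
        (fun x y h => Quotient.sound (Nonempty.map (CategoryTheory.Sum.inl_ C D).mapIso h)))
      (Quotient.lift (fun y => Quotient.mk _ (Sum.inr y : C ⊕ D))
        (fun x y h => Quotient.sound (Nonempty.map (CategoryTheory.Sum.inr_ C D).mapIso h)))
    left_inv := fun q => Quotient.inductionOn q (fun p => by rcases p with x | y <;> rfl)
    right_inv := fun p => by
      rcases p with q | q <;> exact Quotient.inductionOn q (fun x => rfl) }
  equiv q g := by
    refine Quotient.inductionOn q (fun p => ?_)
    rcases p with x | y <;> rfl

instance pi0Finite (C : Type u₁) [Category.{v₁} C] [Finite C] : Finite (Pi0 C) :=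
  Quotient.finite _

end Pi0

end BurnsideAux
/-- Let `X, Y, A, B` be finite right `G`-sets and `ℰ` a finite categorified
`G`-set.  If `I(X) ⊎ I(B) ⊎ ℰ` is weakly equivalent to `I(A) ⊎ I(Y) ⊎ ℰ`, then the right
`G`-sets `X ⊎ B` and `A ⊎ Y` are isomorphic (there is an equivariant bijection). -/
theorem burnside_comparison_injective {G : Type w} [Group G]
    {X Y A B : Type u} [Finite X] [Finite Y] [Finite A] [Finite B]
    {E : Type u} [SmallCategory E] [Finite E] [∀ p q : E, Finite (p ⟶ q)]
    (aX : RightAction G X) (aY : RightAction G Y) (aA : RightAction G A)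
    (aB : RightAction G B) (ε : CatAction G E)
    (h : WeakEquivCat ((discAction aX).sum ((discAction aB).sum ε))
      ((discAction aA).sum ((discAction aY).sum ε))) :
    ∃ φ : X ⊕ B → A ⊕ Y, Function.Bijective φ ∧ IsEquivMap (aX.sum aB) (aA.sum aY) φ := by
  classical
  obtain ⟨F, P, hF, hP, η, ε2, -, -⟩ := h
  -- the induced equivariant bijection on isomorphism classes
  let E1 := BurnsideAux.pi0EqvEquiv F P hF η ε2
  -- decompose both sides
  let q := BurnsideAux.pi0Action ε
  let L : BurnsideAux.EqvEquiv
      (BurnsideAux.pi0Action ((discAction aX).sum ((discAction aB).sum ε)))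
      (aX.sum (aB.sum q)) :=
    (BurnsideAux.pi0Sum (discAction aX) ((discAction aB).sum ε)).trans
      ((BurnsideAux.pi0Disc aX).sumCongr
        ((BurnsideAux.pi0Sum (discAction aB) ε).trans
          ((BurnsideAux.pi0Disc aB).sumCongr (BurnsideAux.EqvEquiv.refl q))))
  let R : BurnsideAux.EqvEquiv
      (BurnsideAux.pi0Action ((discAction aA).sum ((discAction aY).sum ε)))
      (aA.sum (aY.sum q)) :=
    (BurnsideAux.pi0Sum (discAction aA) ((discAction aY).sum ε)).trans
      ((BurnsideAux.pi0Disc aA).sumCongr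
        ((BurnsideAux.pi0Sum (discAction aY) ε).trans
          ((BurnsideAux.pi0Disc aY).sumCongr (BurnsideAux.EqvEquiv.refl q))))
  -- total equivariant bijection with a common finite summand
  let total : BurnsideAux.EqvEquiv ((aX.sum aB).sum q) ((aA.sum aY).sum q) :=
    BurnsideAux.EqvEquiv.sumAssoc.trans
      (L.symm.trans (E1.trans (R.trans BurnsideAux.EqvEquiv.sumAssoc.symm)))
  -- cancel the common summand
  let final := BurnsideAux.cancel_sum total
  exact ⟨final.toEquiv, final.toEquiv.bijective, final.equiv⟩
end
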